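/- Let φ denote the standard Gaussian density, Φ the standard Gaussian CDF, and adopt the convention φ^{(-1)} := Φ. For every real X, every s > 0, every σ > 0, and every natural number l, ∫_0^∞ (1/σ)φ(θ/σ) · (1/s)·(1/√(l!))·φ^{(l)}((X − θ)/s) dθ = ( s^l / (√(l!) · (s² + σ²)^{(l+1)/2}) ) · Σ_{m=0}^{l} C(l,m) · (σ/s)^m · φ^{(m−1)}( (X/√(s² + σ²)) · (σ/s) ) · φ^{(l−m)}( X/√(s² + σ²) ), where C(l,m) is the binomial coefficient. -/

import Mathlib

open MeasureTheory Real Filter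

/-- The standard Gaussian density `φ`. -/
noncomputable def phi (x : ℝ) : ℝ := (Real.sqrt (2 * Real.pi))⁻¹ * Real.exp (-x ^ 2 / 2)

/-- The `l`-th derivative `φ^{(l)}` of the standard Gaussian density (`φ^{(0)} = φ`). -/
noncomputable def phiD (l : ℕ) : ℝ → ℝ := iteratedDeriv l phi

/-- The standard Gaussian CDF `Φ`. -/
noncomputable def PhiCDF (x : ℝ) : ℝ := ∫ t in Set.Iic x, phi t

/-- `φ^{(m−1)}` with the convention `φ^{(-1)} := Φ` (so `m = 0` gives `Φ`). -/
noncomputable def phiDm1 (m : ℕ) : ℝ → ℝ := if m = 0 then PhiCDF else phiD (m - 1)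

lemma contDiff_gauss : ContDiff ℝ ⊤ (fun y : ℝ => Real.exp (-(y ^ 2 / 2))) :=
  Real.contDiff_exp.comp (((contDiff_id.pow 2).div_const 2).neg)

lemma phi_eq (x : ℝ) : phi x = (Real.sqrt (2 * Real.pi))⁻¹ * Real.exp (-(x ^ 2 / 2)) := by
  rw [phi, neg_div]

lemma phi_pos (x : ℝ) : 0 < phi x := by
  rw [phi_eq]
  have h2π : 0 < Real.sqrt (2 * Real.pi) := Real.sqrt_pos.2 (by positivity)
  positivity

lemma diffAt_gauss_iter (l : ℕ) (x : ℝ) :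
    DifferentiableAt ℝ (deriv^[l] (fun y : ℝ => Real.exp (-(y ^ 2 / 2)))) x := by
  have := contDiff_gauss.differentiable_iteratedDeriv l
    (by exact_mod_cast WithTop.coe_lt_top _)
  rw [iteratedDeriv_eq_iterate] at this
  exact this x

lemma phiD_eq (l : ℕ) (x : ℝ) :
    phiD l x = (-1 : ℝ) ^ l * Polynomial.aeval x (Polynomial.hermite l) * phi x := by
  have key : ∀ (n : ℕ) (y : ℝ), deriv^[n] phi y =
      (Real.sqrt (2 * Real.pi))⁻¹ * deriv^[n] (fun y : ℝ => Real.exp (-(y ^ 2 / 2))) y := by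
    intro n
    induction n with
    | zero => intro y; exact phi_eq y
    | succ n ih =>
      intro y
      rw [Function.iterate_succ_apply', Function.iterate_succ_apply',
        funext ih, deriv_const_mul _ (diffAt_gauss_iter n y)]
  rw [phiD, iteratedDeriv_eq_iterate, key, Polynomial.deriv_gaussian_eq_hermite_mul_gaussian,
    phi_eq]
  ring

lemma contDiff_phi : ContDiff ℝ ⊤ phi := by
  have : phi = fun x => (Real.sqrt (2 * Real.pi))⁻¹ * Real.exp (-(x ^ 2 / 2)) := funext phi_eq
  rw [this]; exact contDiff_const.mul contDiff_gauss

lemma continuous_phi : Continuous phi := contDiff_phi.continuous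

lemma hasDerivAt_phiD (l : ℕ) (x : ℝ) : HasDerivAt (phiD l) (phiD (l + 1) x) x := by
  have hd : DifferentiableAt ℝ (phiD l) x := by
    exact (contDiff_phi.differentiable_iteratedDeriv l
      (by exact_mod_cast WithTop.coe_lt_top _)) x
  have : deriv (phiD l) x = phiD (l + 1) x := (iteratedDeriv_succ (n := l) (f := phi)).symm ▸ rfl
  exact this ▸ hd.hasDerivAt

lemma continuous_phiD (l : ℕ) : Continuous (phiD l) := by
  exact (contDiff_phi.differentiable_iteratedDeriv l
    (by exact_mod_cast WithTop.coe_lt_top _)).continuous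

lemma phiD_zero : phiD 0 = phi := iteratedDeriv_zero

lemma phiDm1_succ (m : ℕ) : phiDm1 (m + 1) = phiD m := by
  simp [phiDm1]

lemma poly_gauss_tendsto_atTop (p : Polynomial ℝ) :
    Tendsto (fun x : ℝ => Polynomial.eval x p * Real.exp (-(x ^ 2 / 2))) atTop (nhds 0) := by
  have h0 : Tendsto (fun x : ℝ => |Polynomial.eval x p / Real.exp x| * Real.exp (1/2)) atTop
      (nhds 0) := by
    simpa using ((p.tendsto_div_exp_atTop).abs).mul_const (Real.exp (1/2))
  apply squeeze_zero_norm' _ h0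
  filter_upwards with x
  have hx : Real.exp (-(x ^ 2 / 2)) = (Real.exp x)⁻¹ * Real.exp (x - x ^ 2 / 2) := by
    rw [← Real.exp_neg, ← Real.exp_add]; ring_nf
  have h2 : Real.exp (x - x ^ 2 / 2) ≤ Real.exp (1/2) := by
    apply Real.exp_le_exp.2; nlinarith [sq_nonneg (x - 1)]
  rw [Real.norm_eq_abs, abs_mul, hx, abs_div] at *
  calc |Polynomial.eval x p| * |(Real.exp x)⁻¹ * Real.exp (x - x ^ 2 / 2)|
      = |Polynomial.eval x p| / |Real.exp x| * |Real.exp (x - x ^ 2 / 2)| := by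
        rw [abs_mul, abs_inv]; ring
    _ ≤ |Polynomial.eval x p| / |Real.exp x| * Real.exp (1/2) := by
        apply mul_le_mul_of_nonneg_left _ (by positivity)
        rw [abs_of_pos (Real.exp_pos _)]; exact h2

lemma poly_gauss_tendsto_atBot (p : Polynomial ℝ) :
    Tendsto (fun x : ℝ => Polynomial.eval x p * Real.exp (-(x ^ 2 / 2))) atBot (nhds 0) := by
  have h := poly_gauss_tendsto_atTop (p.comp (-Polynomial.X))
  have h2 : Tendsto (fun x : ℝ => Polynomial.eval (-x) p * Real.exp (-((-x) ^ 2 / 2))) atTop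
      (nhds 0) := by
    simpa [Polynomial.eval_comp, neg_sq] using h
  have := h2.comp tendsto_neg_atBot_atTop
  exact Tendsto.congr (fun x => by simp [Function.comp]) this

lemma bounded_of_tendsto_zero {f : ℝ → ℝ} (hc : Continuous f)
    (ht : Tendsto f atTop (nhds 0)) (hb : Tendsto f atBot (nhds 0)) :
    ∃ C : ℝ, 0 ≤ C ∧ ∀ x, |f x| ≤ C := by
  have h1 : ∀ᶠ y in nhds (0:ℝ), |y| ≤ 1 := by
    filter_upwards [Metric.ball_mem_nhds (0:ℝ) one_pos] with y hy
    rw [Metric.mem_ball, Real.dist_eq, sub_zero] at hy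
    exact le_of_lt hy
  have hT : ∀ᶠ x : ℝ in atTop, |f x| ≤ 1 := ht.eventually h1
  have hB : ∀ᶠ x : ℝ in atBot, |f x| ≤ 1 := hb.eventually h1
  obtain ⟨A, hA⟩ := eventually_atTop.1 hT
  obtain ⟨B, hB'⟩ := eventually_atBot.1 hB
  obtain ⟨M, hM⟩ := (isCompact_Icc (a := B) (b := A)).exists_bound_of_continuousOn
    (hc.continuousOn (s := Set.Icc B A))
  refine ⟨max 1 (max M 0), le_trans zero_le_one (le_max_left _ _), fun x => ?_⟩
  rcases le_total x B with hx | hx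
  · exact le_trans (hB' x hx) (le_max_left _ _)
  rcases le_total A x with hx' | hx'
  · exact le_trans (hA x hx') (le_max_left _ _)
  · have := hM x ⟨hx, hx'⟩
    rw [Real.norm_eq_abs] at this
    exact le_trans this (le_trans (le_max_left M 0) (le_max_right _ _))

lemma phiD_repr (l : ℕ) : ∃ q : Polynomial ℝ, ∀ x,
    phiD l x = Polynomial.eval x q * Real.exp (-(x ^ 2 / 2)) := by
  refine ⟨Polynomial.C ((-1 : ℝ) ^ l * (Real.sqrt (2 * Real.pi))⁻¹) *
    ((Polynomial.hermite l).map (Int.castRingHom ℝ)), fun x => ?_⟩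
  rw [phiD_eq, phi_eq, Polynomial.eval_mul, Polynomial.eval_C, Polynomial.eval_map,
    Polynomial.aeval_def, algebraMap_int_eq]
  ring

lemma phiD_bounded (l : ℕ) : ∃ C : ℝ, 0 ≤ C ∧ ∀ x, |phiD l x| ≤ C := by
  obtain ⟨q, hq⟩ := phiD_repr l
  have he : phiD l = fun x => Polynomial.eval x q * Real.exp (-(x ^ 2 / 2)) := funext hq
  exact bounded_of_tendsto_zero (continuous_phiD l)
    (he ▸ poly_gauss_tendsto_atTop q) (he ▸ poly_gauss_tendsto_atBot q)

lemma integrable_gauss_scaled (a : ℝ) (ha : 0 < a) :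
    Integrable (fun θ : ℝ => phi (θ / a)) := by
  have h : (fun θ : ℝ => phi (θ / a)) =
      fun θ => (Real.sqrt (2 * Real.pi))⁻¹ * Real.exp (-(1 / (2 * a ^ 2)) * θ ^ 2) := by
    funext θ; rw [phi_eq]; congr 2; rw [div_pow]; field_simp
  rw [h]
  exact (integrable_exp_neg_mul_sq (by positivity)).const_mul _

lemma integrable_phi : Integrable phi := by
  simpa using integrable_gauss_scaled 1 one_pos

lemma hasDerivAt_PhiCDF (x : ℝ) : HasDerivAt PhiCDF (phi x) x := by
  have hrw : PhiCDF = fun y => PhiCDF 0 + ∫ t in (0:ℝ)..y, phi t := by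
    funext y
    rw [PhiCDF, PhiCDF, ← intervalIntegral.integral_Iic_sub_Iic
      (integrable_phi.integrableOn) (integrable_phi.integrableOn)]
    ring
  rw [hrw]
  apply HasDerivAt.const_add
  exact intervalIntegral.integral_hasDerivAt_right
    integrable_phi.intervalIntegrable
    (continuous_phi.stronglyMeasurable.stronglyMeasurableAtFilter)
    continuous_phi.continuousAt

lemma hasDerivAt_phiDm1 (m : ℕ) (x : ℝ) : HasDerivAt (phiDm1 m) (phiD m x) x := by
  cases m with
  | zero =>
    simpa [phiDm1, phiD_zero] using hasDerivAt_PhiCDF x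
  | succ m =>
    rw [phiDm1_succ]
    exact hasDerivAt_phiD m x

lemma integral_phi_Ioi_neg (k : ℝ) : ∫ t in Set.Ioi (-k), phi t = PhiCDF k := by
  rw [PhiCDF, ← integral_comp_neg_Iic]
  congr 1; funext t; rw [phi_eq, phi_eq, neg_sq]

lemma integral_Ioi_comp_sub (f : ℝ → ℝ) (a b : ℝ) :
    ∫ x in Set.Ioi a, f (x - b) = ∫ x in Set.Ioi (a - b), f x := by
  have h1 : ∀ x : ℝ, (Set.Ioi a).indicator (fun t => f (t - b)) x =
      (Set.Ioi (a - b)).indicator f (x - b) := by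
    intro x
    by_cases hx : x ∈ Set.Ioi a
    · rw [Set.indicator_of_mem hx, Set.indicator_of_mem (by simpa using sub_lt_sub_right hx b)]
    · rw [Set.indicator_of_notMem hx, Set.indicator_of_notMem (by
        simp only [Set.mem_Ioi] at *; intro h; exact hx (by linarith))]
  rw [← integral_indicator measurableSet_Ioi, ← integral_indicator measurableSet_Ioi]
  rw [funext h1]
  exact integral_sub_right_eq_self ((Set.Ioi (a - b)).indicator f) b

lemma pointwise_gauss_prod (X s σ θ : ℝ) (hs : 0 < s) (hσ : 0 < σ) :
    (1/σ) * phi (θ/σ) * ((1/s) * phi ((X - θ)/s)) =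
      (Real.sqrt (s^2+σ^2))⁻¹ * phi (X/Real.sqrt (s^2+σ^2)) *
      ((1/(s*σ/Real.sqrt (s^2+σ^2))) *
        phi ((θ - X*σ^2/(s^2+σ^2))/(s*σ/Real.sqrt (s^2+σ^2)))) := by
  set c := Real.sqrt (s^2+σ^2) with hcdef
  have hc0 : 0 < c := Real.sqrt_pos.2 (by positivity)
  have hc2 : c^2 = s^2 + σ^2 := Real.sq_sqrt (by positivity)
  set K := (Real.sqrt (2 * Real.pi))⁻¹ with hK
  set μ := X*σ^2/(s^2+σ^2) with hμ
  have h1 : ((θ - μ)/(s*σ/c))^2 = (θ - μ)^2 * (s^2+σ^2) / (s^2*σ^2) := by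
    rw [div_pow, div_pow, mul_pow, hc2]
    field_simp
  have h2 : (X/c)^2 = X^2/(s^2+σ^2) := by rw [div_pow, hc2]
  rw [phi_eq, phi_eq, phi_eq, phi_eq, h1, h2]
  have lhs_eq : (1/σ) * (K * Real.exp (-((θ/σ)^2/2))) *
      ((1/s) * (K * Real.exp (-(((X-θ)/s)^2/2)))) =
      (K*K/(σ*s)) * Real.exp (-((θ/σ)^2/2) + -(((X-θ)/s)^2/2)) := by
    rw [Real.exp_add]; ring
  have rhs_eq : c⁻¹ * (K * Real.exp (-(X^2/(s^2+σ^2)/2))) *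
      ((1/(s*σ/c)) * (K * Real.exp (-((θ-μ)^2*(s^2+σ^2)/(s^2*σ^2)/2)))) =
      (K*K/(σ*s)) * Real.exp (-(X^2/(s^2+σ^2)/2) + -((θ-μ)^2*(s^2+σ^2)/(s^2*σ^2)/2)) := by
    rw [Real.exp_add]; field_simp
  rw [lhs_eq, rhs_eq]
  have hsσ : s^2+σ^2 ≠ 0 := by positivity
  congr 2
  rw [hμ]
  field_simp
  ring

lemma base_case (X s σ : ℝ) (hs : 0 < s) (hσ : 0 < σ) :
    ∫ θ in Set.Ioi (0:ℝ), (1/σ) * phi (θ/σ) * ((1/s) * phi ((X - θ)/s)) =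
      (Real.sqrt (s^2+σ^2))⁻¹ *
        (PhiCDF ((X / Real.sqrt (s^2+σ^2)) * (σ/s)) * phi (X / Real.sqrt (s^2+σ^2))) := by
  set c := Real.sqrt (s^2+σ^2) with hcdef
  have hc0 : 0 < c := Real.sqrt_pos.2 (by positivity)
  have hc2 : c^2 = s^2 + σ^2 := Real.sq_sqrt (by positivity)
  set μ := X*σ^2/(s^2+σ^2) with hμ
  set σ' := s*σ/c with hσ'
  have hσ'0 : 0 < σ' := by positivity
  have hre : ∫ θ in Set.Ioi (0:ℝ), (1/σ) * phi (θ/σ) * ((1/s) * phi ((X - θ)/s)) =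
      ∫ θ in Set.Ioi (0:ℝ), (c⁻¹ * phi (X/c)) * ((1/σ') * phi ((θ - μ)/σ')) := by
    apply setIntegral_congr_fun measurableSet_Ioi
    intro θ _
    simp only []
    rw [pointwise_gauss_prod X s σ θ hs hσ]
  rw [hre, MeasureTheory.integral_const_mul]
  have hint : ∫ θ in Set.Ioi (0:ℝ), (1/σ') * phi ((θ - μ)/σ') = PhiCDF (μ/σ') := by
    rw [MeasureTheory.integral_const_mul]
    have hcomp : ∀ θ : ℝ, phi ((θ - μ)/σ') = (fun t => phi (t * σ'⁻¹)) (θ - μ) := by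
      intro θ; rw [div_eq_mul_inv]
    simp only [hcomp]
    rw [integral_Ioi_comp_sub (fun t => phi (t * σ'⁻¹)) 0 μ,
      integral_comp_mul_right_Ioi phi _ (by positivity : 0 < σ'⁻¹)]
    have : (0 - μ) * σ'⁻¹ = -(μ/σ') := by field_simp; ring
    rw [this, integral_phi_Ioi_neg (μ/σ'), smul_eq_mul, inv_inv]
    field_simp
  rw [hint]
  have harg : μ/σ' = (X/c) * (σ/s) := by
    rw [hμ, hσ', ← hc2]
    field_simp
  rw [harg]
  ring

/-- The (unnormalized) left-hand side as a function of `X`. -/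
noncomputable def Fint (s σ : ℝ) (l : ℕ) (X : ℝ) : ℝ :=
  ∫ θ in Set.Ioi (0:ℝ), (1/σ) * phi (θ/σ) * ((1/s) * phiD l ((X - θ)/s))

lemma continuous_integrand (s σ : ℝ) (l : ℕ) (x : ℝ) :
    Continuous (fun θ : ℝ => (1/σ) * phi (θ/σ) * ((1/s) * phiD l ((x - θ)/s))) := by
  apply Continuous.mul
  · exact continuous_const.mul (continuous_phi.comp (continuous_id.div_const σ))
  · exact continuous_const.mul
      ((continuous_phiD l).comp ((continuous_const.sub continuous_id).div_const s))

lemma integrand_integrable (s σ : ℝ) (hs : 0 < s) (hσ : 0 < σ) (l : ℕ) (x : ℝ) :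
    IntegrableOn (fun θ : ℝ => (1/σ) * phi (θ/σ) * ((1/s) * phiD l ((x - θ)/s)))
      (Set.Ioi (0:ℝ)) := by
  obtain ⟨C, hC0, hC⟩ := phiD_bounded l
  apply Integrable.mono' (g := fun θ : ℝ => (1/σ)*(1/s)*C * phi (θ/σ))
    (((integrable_gauss_scaled σ hσ).const_mul ((1/σ)*(1/s)*C)).restrict)
    ((continuous_integrand s σ l x).aestronglyMeasurable)
  filter_upwards with θ
  have h1 : 0 < phi (θ/σ) := phi_pos _
  rw [Real.norm_eq_abs, abs_mul, abs_mul, abs_mul, abs_of_pos h1,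
    abs_of_pos (by positivity : (0:ℝ) < 1/σ), abs_of_pos (by positivity : (0:ℝ) < 1/s)]
  calc 1/σ * phi (θ/σ) * (1/s * |phiD l ((x - θ)/s)|)
      ≤ 1/σ * phi (θ/σ) * (1/s * C) := by gcongr; exact hC _
    _ = 1/σ*(1/s)*C * phi (θ/σ) := by ring

lemma hasDerivAt_Fint (s σ : ℝ) (hs : 0 < s) (hσ : 0 < σ) (l : ℕ) (x₀ : ℝ) :
    HasDerivAt (Fint s σ l) ((1/s) * Fint s σ (l+1) x₀) x₀ := by
  obtain ⟨C, hC0, hC⟩ := phiD_bounded (l+1)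
  have key := hasDerivAt_integral_of_dominated_loc_of_deriv_le
    (μ := volume.restrict (Set.Ioi (0:ℝ))) (x₀ := x₀)
    (F := fun x θ => (1/σ) * phi (θ/σ) * ((1/s) * phiD l ((x - θ)/s)))
    (F' := fun x θ => (1/σ) * phi (θ/σ) * ((1/s) * ((1/s) * phiD (l+1) ((x - θ)/s))))
    (bound := fun θ => (1/σ)*(1/s)*(1/s)*C * phi (θ/σ))
    (Metric.ball_mem_nhds x₀ one_pos)
    (Eventually.of_forall fun x => (continuous_integrand s σ l x).aestronglyMeasurable)
    (integrand_integrable s σ hs hσ l x₀)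
    (by
      apply Continuous.aestronglyMeasurable
      apply Continuous.mul
      · exact continuous_const.mul (continuous_phi.comp (continuous_id.div_const σ))
      · exact continuous_const.mul (continuous_const.mul
          ((continuous_phiD (l+1)).comp ((continuous_const.sub continuous_id).div_const s))))
    (by
      filter_upwards with θ x _
      have h1 : 0 < phi (θ/σ) := phi_pos _
      rw [Real.norm_eq_abs, abs_mul, abs_mul, abs_mul, abs_of_pos h1,
        abs_of_pos (by positivity : (0:ℝ) < 1/σ), abs_of_pos (by positivity : (0:ℝ) < 1/s)]
      calc 1/σ * phi (θ/σ) * (1/s * |1/s * phiD (l+1) ((x - θ)/s)|)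
          = 1/σ * phi (θ/σ) * (1/s * (1/s * |phiD (l+1) ((x - θ)/s)|)) := by
            rw [abs_mul, abs_of_pos (by positivity : (0:ℝ) < 1/s)]
        _ ≤ 1/σ * phi (θ/σ) * (1/s * (1/s * C)) := by gcongr; exact hC _
        _ = 1/σ*(1/s)*(1/s)*C * phi (θ/σ) := by ring)
    (((integrable_gauss_scaled σ hσ).const_mul ((1/σ)*(1/s)*(1/s)*C)).restrict)
    (by
      filter_upwards with θ x _
      have hinner : HasDerivAt (fun x : ℝ => (x - θ)/s) (1/s) x := by
        simpa using ((hasDerivAt_id x).sub_const θ).div_const s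
      have h2 : HasDerivAt (fun x : ℝ => phiD l ((x - θ)/s))
          (phiD (l+1) ((x - θ)/s) * (1/s)) x :=
        (hasDerivAt_phiD l ((x - θ)/s)).comp x hinner
      have h3 := (h2.const_mul (1/s)).const_mul ((1/σ) * phi (θ/σ))
      exact h3.congr_deriv (by ring))
  have hder := key.2
  have : (∫ θ in Set.Ioi (0:ℝ), (1/σ) * phi (θ/σ) * ((1/s) * ((1/s) * phiD (l+1) ((x₀ - θ)/s))))
      = (1/s) * Fint s σ (l+1) x₀ := by
    rw [Fint, ← MeasureTheory.integral_const_mul]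
    congr 1; funext θ; ring
  rw [Fint] at *
  exact this ▸ hder

/-- Pascal-type recombination of the sum. -/
lemma pascal_sum (l : ℕ) (r β : ℝ) (A B : ℕ → ℝ) :
    ∑ m ∈ Finset.range (l+1), ((l.choose m : ℝ) * r^m * ((r*β) * A (m+1) * B (l-m)) +
      (l.choose m : ℝ) * r^m * (β * A m * B (l-m+1))) =
    β * ∑ m ∈ Finset.range (l+2), ((l+1).choose m : ℝ) * r^m * A m * B (l+1-m) := by
  rw [Finset.sum_add_distrib, Finset.mul_sum,
    Finset.sum_range_succ' (fun m => β * (((l+1).choose m : ℝ) * r^m * A m * B (l+1-m))) (l+1)]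
  have hS2 : (∑ m ∈ Finset.range (l+1), (l.choose m : ℝ) * r^m * (β * A m * B (l-m+1))) =
      (∑ i ∈ Finset.range (l+1), (l.choose (i+1) : ℝ) * r^(i+1) * (β * A (i+1) * B (l-(i+1)+1)))
        + β * (((l+1).choose 0 : ℝ) * r^0 * A 0 * B (l+1-0)) := by
    rw [Finset.sum_range_succ'
      (fun m => (l.choose m : ℝ) * r^m * (β * A m * B (l-m+1))) l,
      Finset.sum_range_succ
      (fun i => (l.choose (i+1) : ℝ) * r^(i+1) * (β * A (i+1) * B (l-(i+1)+1))) l,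
      Nat.choose_succ_self]
    push_cast
    simp
    ring
  rw [hS2, ← add_assoc, ← Finset.sum_add_distrib]
  congr 1
  apply Finset.sum_congr rfl
  intro i hi
  have hil : i ≤ l := Nat.lt_succ_iff.1 (Finset.mem_range.1 hi)
  rcases eq_or_lt_of_le hil with hcase | hcase
  · subst hcase
    rw [Nat.choose_succ_self, Nat.choose_self, Nat.choose_self, Nat.sub_self,
      Nat.succ_sub_succ, Nat.sub_self]
    push_cast
    ring
  · have h1 : l - (i+1) + 1 = l - i := by omega
    have h2 : l + 1 - (i+1) = l - i := by omega
    rw [h1, h2, Nat.choose_succ_succ l i]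
    push_cast
    ring

/-- The right-hand side sum as a function of `X`. -/
noncomputable def Ssum (r α β : ℝ) (l : ℕ) (X : ℝ) : ℝ :=
  ∑ m ∈ Finset.range (l+1), (l.choose m : ℝ) * r^m * phiDm1 m (α*X) * phiD (l-m) (β*X)

lemma hasDerivAt_Ssum (r β : ℝ) (l : ℕ) (X : ℝ) :
    HasDerivAt (Ssum r (r*β) β l) (β * Ssum r (r*β) β (l+1) X) X := by
  have hterm : ∀ m ∈ Finset.range (l+1),
      HasDerivAt (fun Y => (l.choose m : ℝ) * r^m * phiDm1 m ((r*β)*Y) * phiD (l-m) (β*Y))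
        ((l.choose m : ℝ) * r^m * ((r*β) * phiD m ((r*β)*X) * phiD (l-m) (β*X)) +
          (l.choose m : ℝ) * r^m * (β * phiDm1 m ((r*β)*X) * phiD (l-m+1) (β*X))) X := by
    intro m _
    have hA : HasDerivAt (fun Y : ℝ => phiDm1 m ((r*β)*Y)) (phiD m ((r*β)*X) * (r*β)) X := by
      have hin : HasDerivAt (fun Y : ℝ => (r*β)*Y) (r*β) X := by
        simpa using (hasDerivAt_id X).const_mul (r*β)
      exact (hasDerivAt_phiDm1 m ((r*β)*X)).comp X hin
    have hB : HasDerivAt (fun Y : ℝ => phiD (l-m) (β*Y)) (phiD (l-m+1) (β*X) * β) X := by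
      have hin : HasDerivAt (fun Y : ℝ => β*Y) β X := by
        simpa using (hasDerivAt_id X).const_mul β
      exact (hasDerivAt_phiD (l-m) (β*X)).comp X hin
    have h := (hA.const_mul ((l.choose m : ℝ) * r^m)).mul hB
    exact h.congr_deriv (by ring)
  have h := HasDerivAt.fun_sum hterm
  have heq : (∑ m ∈ Finset.range (l+1),
      ((l.choose m : ℝ) * r^m * ((r*β) * phiD m ((r*β)*X) * phiD (l-m) (β*X)) +
        (l.choose m : ℝ) * r^m * (β * phiDm1 m ((r*β)*X) * phiD (l-m+1) (β*X)))) =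
      β * Ssum r (r*β) β (l+1) X := by
    rw [Ssum]
    simp only [← phiDm1_succ]
    exact pascal_sum l r β (fun m => phiDm1 m ((r*β)*X)) (fun j => phiD j (β*X))
  rw [heq] at h
  exact h

/-- The half-line convolution identity giving the quantities `τ_{jkl}`:
`∫₀^∞ (1/σ)φ(θ/σ) (1/s)(1/√l!)φ^{(l)}((X−θ)/s) dθ
 = (s^l/(√l! (s²+σ²)^{(l+1)/2})) Σ_{m=0}^{l} C(l,m) (σ/s)^m
    φ^{(m−1)}((X/√(s²+σ²))(σ/s)) φ^{(l−m)}(X/√(s²+σ²))`. -/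
theorem half_line_convolution (X s σ : ℝ) (hs : 0 < s) (hσ : 0 < σ) (l : ℕ) :
    ∫ θ in Set.Ioi (0 : ℝ), (1 / σ) * phi (θ / σ) *
        ((1 / s) * (1 / Real.sqrt (Nat.factorial l)) * phiD l ((X - θ) / s)) =
      s ^ l / (Real.sqrt (Nat.factorial l) * (Real.sqrt (s ^ 2 + σ ^ 2)) ^ (l + 1)) *
        ∑ m ∈ Finset.range (l + 1), (l.choose m : ℝ) * (σ / s) ^ m *
          phiDm1 m ((X / Real.sqrt (s ^ 2 + σ ^ 2)) * (σ / s)) *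
          phiD (l - m) (X / Real.sqrt (s ^ 2 + σ ^ 2)) := by
  set c := Real.sqrt (s ^ 2 + σ ^ 2) with hc
  have hc0 : 0 < c := Real.sqrt_pos.2 (by positivity)
  have hsum : ∀ (l' : ℕ) (Y : ℝ),
      Ssum (σ/s) ((σ/s)*(1/c)) (1/c) l' Y =
      ∑ m ∈ Finset.range (l' + 1), (l'.choose m : ℝ) * (σ / s) ^ m *
          phiDm1 m ((Y / c) * (σ / s)) * phiD (l' - m) (Y / c) := by
    intro l' Y
    rw [Ssum]
    apply Finset.sum_congr rfl
    intro m _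
    rw [show ((σ/s)*(1/c))*Y = (Y/c)*(σ/s) by ring, show (1/c)*Y = Y/c by ring]
  have main : ∀ (l' : ℕ) (Y : ℝ),
      Fint s σ l' Y = s^l' / c^(l'+1) * Ssum (σ/s) ((σ/s)*(1/c)) (1/c) l' Y := by
    intro l'
    induction l' with
    | zero =>
      intro Y
      have hS0 : Ssum (σ/s) ((σ/s)*(1/c)) (1/c) 0 Y = PhiCDF ((Y/c)*(σ/s)) * phi (Y/c) := by
        rw [hsum 0 Y]
        simp [phiDm1, phiD_zero]
      rw [Fint]
      simp only [phiD_zero]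
      rw [base_case Y s σ hs hσ, hS0, pow_zero, pow_one]
      ring
    | succ n ih =>
      intro Y
      have hF := hasDerivAt_Fint s σ hs hσ n Y
      have hFeq : Fint s σ n =
          fun Z => s^n/c^(n+1) * Ssum (σ/s) ((σ/s)*(1/c)) (1/c) n Z := funext ih
      have hS := (hasDerivAt_Ssum (σ/s) (1/c) n Y).const_mul (s^n/c^(n+1))
      rw [← hFeq] at hS
      have huniq := hF.unique hS
      calc Fint s σ (n+1) Y = s * ((1/s) * Fint s σ (n+1) Y) := by field_simp
        _ = s * (s^n/c^(n+1) * ((1/c) * Ssum (σ/s) ((σ/s)*(1/c)) (1/c) (n+1) Y)) := by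
            rw [huniq]
        _ = s^(n+1)/c^(n+1+1) * Ssum (σ/s) ((σ/s)*(1/c)) (1/c) (n+1) Y := by
            rw [pow_succ, pow_succ]
            field_simp
            ring
  have hL : ∫ θ in Set.Ioi (0 : ℝ), (1 / σ) * phi (θ / σ) *
      ((1 / s) * (1 / Real.sqrt (Nat.factorial l)) * phiD l ((X - θ) / s)) =
      (1 / Real.sqrt (Nat.factorial l)) * Fint s σ l X := by
    rw [Fint, ← MeasureTheory.integral_const_mul]
    congr 1
    funext θ
    ring
  rw [hL, main l X, hsum l X]
  ring
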